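/- Let R be a commutative ring, D : R → R a derivation extended coefficientwise to R[X], c ∈ R, and for an integer k let ∇_k f = D f − (X² − c) f′ + k X f on R[X]. For j ≥ 1 set ∇_k^j := ∇_{k+2(j−1)} ∘ ⋯ ∘ ∇_{k+2} ∘ ∇_k (and ∇_k^0 = id). Then for every f ∈ R[X] with f′ = 0 (i.e., f a constant polynomial) and every j ≥ 1, one has (∇_k^j f)′ = j(k + j − 1) · ∇_k^{j−1} f. -/

import Mathlib

open Polynomial

/-- The Gauss–Manin connection in local coordinates, with integer weight. -/
noncomputable def nabla {R : Type*} [CommRing R]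
    (Dp : R[X] → R[X]) (c : R) (K : ℤ) (f : R[X]) : R[X] :=
  Dp f - (X ^ 2 - C c) * derivative f + C ((K : ℤ) : R) * X * f

/-- Iterated connection `∇_k^j = ∇_{k+2(j-1)} ∘ ⋯ ∘ ∇_{k+2} ∘ ∇_k`. -/
noncomputable def nablaIter {R : Type*} [CommRing R]
    (Dp : R[X] → R[X]) (c : R) (k : ℤ) : ℕ → R[X] → R[X]
  | 0, f => f
  | j + 1, f => nabla Dp c (k + 2 * j) (nablaIter Dp c k j f)

/-- `ε(∇^j f) = j(k+j-1) ∇^{j-1} f` for holomorphic (constant) `f`. -/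
theorem stmt6 (R : Type*) [CommRing R] (D : R → R)
    (hadd : ∀ x y, D (x + y) = D x + D y)
    (hmul : ∀ x y, D (x * y) = D x * y + x * D y)
    (Dp : R[X] → R[X])
    (hDp : ∀ (f : R[X]) (i : ℕ), (Dp f).coeff i = D (f.coeff i))
    (c : R) (k : ℤ) (f : R[X]) (hf : derivative f = 0)
    (j : ℕ) (hj : 1 ≤ j) :
    derivative (nablaIter Dp c k j f)
      = ((j : ℤ) * (k + (j : ℤ) - 1)) • nablaIter Dp c k (j - 1) f := by
  have hD0 : D 0 = 0 := by
    have h := hadd 0 0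
    simp only [add_zero] at h
    exact left_eq_add.mp h
  have hD1 : D 1 = 0 := by
    have h := hmul 1 1
    simp only [mul_one, one_mul] at h
    exact left_eq_add.mp h
  have hDneg : ∀ x, D (-x) = - D x := by
    intro x
    have h := hadd x (-x)
    simp only [add_neg_cancel, hD0] at h
    exact eq_neg_of_add_eq_zero_right h.symm
  have hDnat0 : ∀ n : ℕ, D ((n : R)) = 0 := by
    intro n
    induction n with
    | zero => simpa using hD0
    | succ m ih => push_cast; rw [hadd]; simp [ih, hD1]
  have hDint : ∀ z : ℤ, D ((z : R)) = 0 := by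
    intro z
    obtain ⟨n, rfl | rfl⟩ := z.eq_nat_or_neg
    · push_cast; exact hDnat0 n
    · push_cast; rw [hDneg]; simp [hDnat0]
  have hDmulint : ∀ (z : ℤ) (x : R), D ((z : R) * x) = (z : R) * D x := by
    intro z x
    rw [hmul, hDint, zero_mul, zero_add]
  have hDpadd : ∀ g h : R[X], Dp (g + h) = Dp g + Dp h := by
    intro g h; ext i; simp [hDp, hadd]
  have hDp0 : Dp 0 = 0 := by
    ext i; simp [hDp, hD0]
  have hDpsmul : ∀ (z : ℤ) (g : R[X]), Dp (z • g) = z • Dp g := by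
    intro z g; ext i
    rw [hDp, Polynomial.coeff_smul, Polynomial.coeff_smul, zsmul_eq_mul, zsmul_eq_mul, hDp g i]
    exact hDmulint z _
  have hDnat : ∀ n : ℕ, D ((n : R)) = 0 := by
    intro n; have := hDint (n : ℤ); push_cast at this; exact this
  have hDpderiv : ∀ g : R[X], derivative (Dp g) = Dp (derivative g) := by
    intro g; ext i
    rw [coeff_derivative, hDp, hDp, coeff_derivative, hmul]
    have : D ((i : R) + 1) = 0 := by
      have := hDnat (i + 1); push_cast at this; exact this
    rw [this, mul_zero, add_zero]
  have hcomm : ∀ (K : ℤ) (g : R[X]),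
      derivative (nabla Dp c K g)
        = nabla Dp c (K - 2) (derivative g) + C ((K : R)) * g := by
    intro K g
    unfold nabla
    simp only [hDpderiv, derivative_add, derivative_sub, derivative_mul, derivative_X_pow,
      derivative_C, derivative_X, Int.cast_id, Int.cast_sub, Int.cast_ofNat, map_sub,
      map_add, map_mul, map_ofNat, Nat.cast_ofNat]
    push_cast
    ring
  have hnabla_smul : ∀ (K : ℤ) (z : ℤ) (g : R[X]),
      nabla Dp c K (z • g) = z • nabla Dp c K g := by
    intro K z g
    unfold nabla
    rw [hDpsmul]
    simp only [derivative_smul, smul_add, smul_sub]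
    simp only [zsmul_eq_mul]
    ring
  induction j, hj using Nat.le_induction with
  | base =>
    show derivative (nabla Dp c (k + 2 * ((0:ℕ):ℤ)) (nablaIter Dp c k 0 f)) = _
    rw [hcomm]
    show nabla Dp c _ (derivative f) + _ = _
    rw [hf]
    unfold nabla
    simp only [hDp0, derivative_zero, mul_zero, sub_zero, zero_sub, neg_zero, zero_add,
      Int.cast_id]
    show C ((k + 2 * ((0:ℕ):ℤ) : ℤ) : R) * f = _
    simp only [nablaIter, Nat.cast_zero, mul_zero, add_zero, zsmul_eq_mul,
      Polynomial.C_eq_intCast]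
    push_cast
    rw [show nablaIter Dp c k 0 f = f from rfl]
    ring
  | succ j hj ih =>
    have hstep : nabla Dp c (k + 2 * (j : ℤ) - 2) (nablaIter Dp c k (j - 1) f)
        = nablaIter Dp c k j f := by
      obtain ⟨j', rfl⟩ : ∃ j', j = j' + 1 := ⟨j - 1, (Nat.succ_pred_eq_of_pos hj).symm⟩
      show nabla Dp c (k + 2 * ((j' + 1 : ℕ) : ℤ) - 2) (nablaIter Dp c k j' f)
          = nabla Dp c (k + 2 * ((j' : ℕ) : ℤ)) (nablaIter Dp c k j' f)
      congr 1
      push_cast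
      ring
    show derivative (nabla Dp c (k + 2 * (j : ℤ)) (nablaIter Dp c k j f)) = _
    rw [hcomm, ih, hnabla_smul, hstep]
    have h2 : (C (((k + 2 * (j : ℤ)) : ℤ) : R)) * nablaIter Dp c k j f
        = (k + 2 * (j : ℤ)) • nablaIter Dp c k j f := by
      rw [zsmul_eq_mul, Polynomial.C_eq_intCast]
    rw [h2, ← add_smul]
    show _ = ((((j:ℤ) + 1)) * (k + ((j:ℤ) + 1) - 1)) • nablaIter Dp c k (j + 1 - 1) f
    simp only [Nat.add_sub_cancel]
    congr 1
    ring
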